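/- Let A_1, A_2 ⊆ F_q with 3 ≤ #A_1 = d_1 ≤ d_2 = #A_2 and d ≥ 2. Then the second Hamming weight of C(d) over X = A_1 × A_2 equals: (d_1 − d + 1)(d_2 − 1) if 2 ≤ d < d_1; d_1 + d_2 − d if d_1 ≤ d ≤ d_1 + d_2 − 2; and 2 if d > d_1 + d_2 − 2. -/

import Mathlib

open MvPolynomial

/-- The set of Hamming weights of nonzero codewords of `C(d)` over
`X = A_1 × ⋯ × A_n`. -/
def codeWeights (F : Type*) [Field F] (n : ℕ) (A : Fin n → Finset F)
    (d : ℕ) : Set ℕ :=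
  {w | ∃ f : MvPolynomial (Fin n) F, f.totalDegree ≤ d ∧
    w = Set.ncard {x : Fin n → F | (∀ i, x i ∈ A i) ∧ eval x f ≠ 0} ∧ w ≠ 0}


noncomputable section SecondWeight

open scoped Classical

namespace SW

variable {F : Type*} [Field F]

/-- weighted (total) degree bound for an element of `F[x][y]`. -/
def wle (p : Polynomial (Polynomial F)) (n : ℕ) : Prop :=
  ∀ i j : ℕ, n < i + j → (p.coeff j).coeff i = 0

/-- the column polynomial `f(a, ·) ∈ F[y]`. -/
def colp (a : F) (p : Polynomial (Polynomial F)) : Polynomial F :=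
  p.map (Polynomial.evalRingHom a)

/-- evaluation of a bivariate polynomial. -/
def ev (a b : F) (p : Polynomial (Polynomial F)) : F := (colp a p).eval b

@[simp] lemma coeff_colp (a : F) (p : Polynomial (Polynomial F)) (j : ℕ) :
    (colp a p).coeff j = (p.coeff j).eval a := by
  simp [colp, Polynomial.coeff_map]

@[simp] lemma colp_zero (a : F) : colp a (0 : Polynomial (Polynomial F)) = 0 := by
  simp [colp]

@[simp] lemma colp_mul (a : F) (p q : Polynomial (Polynomial F)) :
    colp a (p * q) = colp a p * colp a q := by simp [colp]

@[simp] lemma colp_add (a : F) (p q : Polynomial (Polynomial F)) :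
    colp a (p + q) = colp a p + colp a q := by simp [colp]

@[simp] lemma colp_C (a : F) (u : Polynomial F) :
    colp a (Polynomial.C u) = Polynomial.C (u.eval a) := by
  simp [colp]

@[simp] lemma colp_X (a : F) : colp a (Polynomial.X : Polynomial (Polynomial F)) = Polynomial.X := by
  simp [colp]

lemma colp_natDegree_le (a : F) (p : Polynomial (Polynomial F)) :
    (colp a p).natDegree ≤ p.natDegree :=
  Polynomial.natDegree_map_le

@[simp] lemma ev_mul (a b : F) (p q : Polynomial (Polynomial F)) :
    ev a b (p * q) = ev a b p * ev a b q := by simp [ev]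

@[simp] lemma ev_add (a b : F) (p q : Polynomial (Polynomial F)) :
    ev a b (p + q) = ev a b p + ev a b q := by simp [ev]

@[simp] lemma ev_C (a b : F) (u : Polynomial F) :
    ev a b (Polynomial.C u) = u.eval a := by simp [ev]

@[simp] lemma ev_X (a b : F) : ev a b (Polynomial.X : Polynomial (Polynomial F)) = b := by
  simp [ev]

/-- The swap `x ↔ y` ring homomorphism on `F[x][y]`. -/
def tau : Polynomial (Polynomial F) →+* Polynomial (Polynomial F) :=
  Polynomial.eval₂RingHom (Polynomial.mapRingHom Polynomial.C) (Polynomial.C Polynomial.X)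

@[simp] lemma tau_C (u : Polynomial F) :
    tau (Polynomial.C u : Polynomial (Polynomial F)) = u.map Polynomial.C := by
  simp [tau]

@[simp] lemma tau_X :
    tau (Polynomial.X : Polynomial (Polynomial F)) = Polynomial.C Polynomial.X := by
  simp [tau]

lemma coeff_coeff_tau (p : Polynomial (Polynomial F)) (i j : ℕ) :
    ((tau p).coeff i).coeff j = (p.coeff j).coeff i := by
  induction p using Polynomial.induction_on' with
  | add p q hp hq => simp [map_add, hp, hq]
  | monomial n u =>
      rw [← Polynomial.C_mul_X_pow_eq_monomial]
      rw [map_mul, map_pow, tau_C, tau_X, ← Polynomial.C_pow]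
      simp only [Polynomial.coeff_mul_C, Polynomial.coeff_map, Polynomial.coeff_C_mul,
        Polynomial.coeff_X_pow, apply_ite (fun r : Polynomial F => r.coeff i),
        Polynomial.coeff_zero, mul_ite, mul_one, mul_zero]

@[simp] lemma ev_pow (a b : F) (p : Polynomial (Polynomial F)) (n : ℕ) :
    ev a b (p ^ n) = (ev a b p) ^ n := by
  simp [ev, colp, Polynomial.map_pow]

@[simp] lemma ev_sub (a b : F) (p q : Polynomial (Polynomial F)) :
    ev a b (p - q) = ev a b p - ev a b q := by
  simp [ev, colp, Polynomial.map_sub]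

lemma colp_mapC (a : F) (u : Polynomial F) : colp a (u.map Polynomial.C) = u := by
  rw [colp, Polynomial.map_map]
  have h : (Polynomial.evalRingHom a).comp Polynomial.C = RingHom.id F := by
    ext x; simp
  rw [h, Polynomial.map_id]

lemma tau_mapC (u : Polynomial F) :
    tau (u.map Polynomial.C) = (Polynomial.C u : Polynomial (Polynomial F)) := by
  induction u using Polynomial.induction_on' with
  | add p q hp hq => rw [Polynomial.map_add, map_add, hp, hq, ← Polynomial.C_add]
  | monomial m c =>
      rw [← Polynomial.C_mul_X_pow_eq_monomial, Polynomial.map_mul, Polynomial.map_C,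
        Polynomial.map_pow, Polynomial.map_X, map_mul, map_pow, tau_C, tau_X,
        Polynomial.map_C, ← Polynomial.C_pow, ← Polynomial.C_mul]

@[simp] lemma tau_tau (p : Polynomial (Polynomial F)) : tau (tau p) = p := by
  induction p using Polynomial.induction_on' with
  | add p q hp hq => rw [map_add, map_add, hp, hq]
  | monomial n u =>
      rw [← Polynomial.C_mul_X_pow_eq_monomial, map_mul, map_pow, tau_C, tau_X,
        map_mul, map_pow, tau_mapC, tau_C, Polynomial.map_X]

lemma tau_injective : Function.Injective (tau : Polynomial (Polynomial F) → _) := by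
  intro p q h
  have := congrArg tau h
  simpa using this

lemma ev_tau (a b : F) (p : Polynomial (Polynomial F)) : ev a b (tau p) = ev b a p := by
  induction p using Polynomial.induction_on' with
  | add p q hp hq => rw [map_add, ev_add, ev_add, hp, hq]
  | monomial n u =>
      rw [← Polynomial.C_mul_X_pow_eq_monomial, map_mul, map_pow, tau_C, tau_X,
        ev_mul, ev_pow, ev_mul, ev_pow, ev_C, ev_X]
      have : ev a b (u.map Polynomial.C) = u.eval b := by
        rw [ev, colp_mapC]
      rw [this, ev_C]
      simp

lemma wle_tau {p : Polynomial (Polynomial F)} {n : ℕ} (h : wle p n) : wle (tau p) n := by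
  intro i j hij
  rw [coeff_coeff_tau]
  exact h j i (by omega)

lemma wle_mono {p : Polynomial (Polynomial F)} {n m : ℕ} (hnm : n ≤ m) (h : wle p n) :
    wle p m := fun i j hij => h i j (by omega)

lemma wle_zero (n : ℕ) : wle (0 : Polynomial (Polynomial F)) n := by
  intro i j _; simp

lemma wle_add {p q : Polynomial (Polynomial F)} {n : ℕ} (hp : wle p n) (hq : wle q n) :
    wle (p + q) n := by
  intro i j hij
  simp [Polynomial.coeff_add, hp i j hij, hq i j hij]

lemma wle_sub {p q : Polynomial (Polynomial F)} {n : ℕ} (hp : wle p n) (hq : wle q n) :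
    wle (p - q) n := by
  intro i j hij
  simp [Polynomial.coeff_sub, hp i j hij, hq i j hij]

lemma wle_mul {p q : Polynomial (Polynomial F)} {n m : ℕ} (hp : wle p n) (hq : wle q m) :
    wle (p * q) (n + m) := by
  intro i j hij
  rw [Polynomial.coeff_mul, Polynomial.finset_sum_coeff]
  apply Finset.sum_eq_zero
  intro x hx
  have hxj : x.1 + x.2 = j := Finset.HasAntidiagonal.mem_antidiagonal.mp hx
  rw [Polynomial.coeff_mul]
  apply Finset.sum_eq_zero
  intro y hy
  have hyi : y.1 + y.2 = i := Finset.HasAntidiagonal.mem_antidiagonal.mp hy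
  by_cases h1 : n < y.1 + x.1
  · rw [hp y.1 x.1 h1, zero_mul]
  · rw [hq y.2 x.2 (by omega), mul_zero]

lemma wle_C (u : Polynomial F) : wle (Polynomial.C u : Polynomial (Polynomial F)) u.natDegree := by
  intro i j hij
  rcases Nat.eq_zero_or_pos j with hj | hj
  · subst hj
    rw [Polynomial.coeff_C_zero]
    exact Polynomial.coeff_eq_zero_of_natDegree_lt (by omega)
  · rw [Polynomial.coeff_C, if_neg (by omega)]
    simp

lemma wle_monomial (k : ℕ) (u : Polynomial F) :
    wle (Polynomial.monomial k u : Polynomial (Polynomial F)) (u.natDegree + k) := by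
  intro i j hij
  rw [Polynomial.coeff_monomial]
  by_cases h : k = j
  · subst h
    rw [if_pos rfl]
    exact Polynomial.coeff_eq_zero_of_natDegree_lt (by omega)
  · rw [if_neg h]; simp

lemma wle_X : wle (Polynomial.X : Polynomial (Polynomial F)) 1 := by
  intro i j hij
  rw [Polynomial.coeff_X]
  by_cases h : 1 = j
  · rw [if_pos h]
    exact Polynomial.coeff_eq_zero_of_natDegree_lt (by simp; omega)
  · rw [if_neg h]; simp

lemma natDegree_coeff_of_wle {p : Polynomial (Polynomial F)} {n : ℕ} (h : wle p n) (j : ℕ) :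
    (p.coeff j).natDegree ≤ n - j := by
  apply Polynomial.natDegree_le_iff_coeff_eq_zero.mpr
  intro i hi
  exact h i j (by omega)

lemma natDegree_le_of_wle {p : Polynomial (Polynomial F)} {n : ℕ} (h : wle p n) :
    p.natDegree ≤ n := by
  apply Polynomial.natDegree_le_iff_coeff_eq_zero.mpr
  intro j hj
  ext i
  simp [h i j (by omega)]

lemma natDegree_colp_le_of_wle {p : Polynomial (Polynomial F)} {n : ℕ} (h : wle p n) (a : F) :
    (colp a p).natDegree ≤ n :=
  le_trans (colp_natDegree_le a p) (natDegree_le_of_wle h)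

/-- vanishing on a finset gives divisibility by the corresponding product. -/
lemma vanish_dvd (S : Finset F) (q : Polynomial F) (h : ∀ s ∈ S, q.eval s = 0) :
    (∏ s ∈ S, (Polynomial.X - Polynomial.C s)) ∣ q := by
  classical
  induction S using Finset.induction_on generalizing q with
  | empty => simpa using one_dvd q
  | @insert a S ha ih =>
      rw [Finset.prod_insert ha]
      have hq : (Polynomial.X - Polynomial.C a) ∣ q := by
        rw [Polynomial.dvd_iff_isRoot]
        exact h a (Finset.mem_insert_self a S)
      obtain ⟨q', rfl⟩ := hq
      have h' : ∀ s ∈ S, q'.eval s = 0 := by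
        intro s hs
        have hev := h s (Finset.mem_insert_of_mem hs)
        rw [Polynomial.eval_mul, Polynomial.eval_sub, Polynomial.eval_X,
          Polynomial.eval_C] at hev
        have hsa : s - a ≠ 0 := by
          intro hc
          apply ha
          have : s = a := by linear_combination hc
          rwa [← this]
        exact (mul_eq_zero.mp hev).resolve_left hsa
      exact mul_dvd_mul_left _ (ih q' h')

/-- a nonzero polynomial vanishing on `S` has degree at least `S.card`. -/
lemma card_le_natDegree_of_vanish (S : Finset F) (q : Polynomial F) (hq : q ≠ 0)
    (h : ∀ s ∈ S, q.eval s = 0) : S.card ≤ q.natDegree := by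
  have hdvd := vanish_dvd S q h
  have h2 := Polynomial.natDegree_le_of_dvd hdvd hq
  rw [Polynomial.natDegree_prod _ _ (fun s _ => Polynomial.X_sub_C_ne_zero s)] at h2
  simpa using h2

variable [DecidableEq F]

/-- number of nonzero points of `p` in column `a`. -/
def wcol (B : Finset F) (a : F) (p : Polynomial (Polynomial F)) : ℕ :=
  (B.filter fun b => ev a b p ≠ 0).card

/-- number of zero points of `p` in column `a`. -/
def zcol (B : Finset F) (a : F) (p : Polynomial (Polynomial F)) : ℕ :=
  (B.filter fun b => ev a b p = 0).card

/-- the weight (number of nonzero points) of `p` on the grid `A ×ˢ B`. -/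
def wt (A B : Finset F) (p : Polynomial (Polynomial F)) : ℕ :=
  ∑ a ∈ A, wcol B a p

lemma wcol_add_zcol (B : Finset F) (a : F) (p : Polynomial (Polynomial F)) :
    wcol B a p + zcol B a p = B.card := by
  classical
  have h := Finset.card_filter_add_card_filter_not (s := B)
    (p := fun b => ev a b p ≠ 0)
  have h2 : (B.filter fun b => ¬ ev a b p ≠ 0) = B.filter fun b => ev a b p = 0 := by
    apply Finset.filter_congr
    intro b _
    simp
  rw [wcol, zcol, ← h2]
  convert h using 2

lemma zcol_le_natDegree {B : Finset F} {a : F} {p : Polynomial (Polynomial F)}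
    (hcol : colp a p ≠ 0) : zcol B a p ≤ (colp a p).natDegree := by
  apply card_le_natDegree_of_vanish _ _ hcol
  intro s hs
  exact (Finset.mem_filter.mp hs).2

lemma le_wcol {B : Finset F} {a : F} {p : Polynomial (Polynomial F)}
    (hcol : colp a p ≠ 0) : B.card - (colp a p).natDegree ≤ wcol B a p := by
  have h1 := wcol_add_zcol B a p
  have h2 := zcol_le_natDegree (B := B) hcol
  omega

lemma wcol_pos {B : Finset F} {a : F} {p : Polynomial (Polynomial F)}
    (hcol : colp a p ≠ 0) (hdeg : (colp a p).natDegree < B.card) : 0 < wcol B a p := by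
  have := le_wcol (B := B) hcol
  omega

lemma wt_card (A B : Finset F) (p : Polynomial (Polynomial F)) :
    ((A ×ˢ B).filter fun ab => ev ab.1 ab.2 p ≠ 0).card = wt A B p := by
  rw [Finset.card_filter, Finset.sum_product]
  simp [wt, wcol, Finset.card_filter]

lemma wt_tau (A B : Finset F) (p : Polynomial (Polynomial F)) :
    wt B A (tau p) = wt A B p := by
  simp only [wt, wcol, Finset.card_filter]
  rw [Finset.sum_comm]
  simp [ev_tau]

lemma wt_const (A B : Finset F) (c : F) (hc : c ≠ 0) :
    wt A B (Polynomial.C (Polynomial.C c)) = A.card * B.card := by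
  simp only [wt, wcol]
  have : ∀ a b : F, ev a b (Polynomial.C (Polynomial.C c)) = c := by
    intro a b; simp
  calc ∑ a ∈ A, ((B.filter fun b => ev a b (Polynomial.C (Polynomial.C c)) ≠ 0)).card
      = ∑ a ∈ A, B.card := by
        apply Finset.sum_congr rfl
        intro a _
        congr 1
        rw [Finset.filter_true_of_mem]
        intro b _
        rw [this a b]
        exact hc
    _ = A.card * B.card := by rw [Finset.sum_const, smul_eq_mul]

lemma wt_smul (A B : Finset F) (c : F) (hc : c ≠ 0) (p : Polynomial (Polynomial F)) :
    wt A B (Polynomial.C (Polynomial.C c) * p) = wt A B p := by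
  simp only [wt, wcol]
  apply Finset.sum_congr rfl
  intro a _
  congr 1
  apply Finset.filter_congr
  intro b _
  have : ev a b (Polynomial.C (Polynomial.C c) * p) = c * ev a b p := by simp
  rw [this]
  simp [hc]

lemma wt_peelX {A B : Finset F} {a : F} (ha : a ∈ A) (g : Polynomial (Polynomial F)) :
    wt A B (Polynomial.C (Polynomial.X - Polynomial.C a) * g) = wt (A.erase a) B g := by
  have hev : ∀ a' b : F, ev a' b (Polynomial.C (Polynomial.X - Polynomial.C a) * g)
      = (a' - a) * ev a' b g := by
    intro a' b; simp
  rw [wt, ← Finset.sum_erase_add _ _ ha]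
  have hzero : wcol B a (Polynomial.C (Polynomial.X - Polynomial.C a) * g) = 0 := by
    rw [wcol, Finset.card_eq_zero, Finset.filter_eq_empty_iff]
    intro b _
    rw [hev a b]
    simp
  rw [hzero, add_zero, wt]
  apply Finset.sum_congr rfl
  intro a' ha'
  rw [wcol, wcol]
  congr 1
  apply Finset.filter_congr
  intro b _
  rw [hev a' b]
  have : a' - a ≠ 0 := sub_ne_zero.mpr (Finset.ne_of_mem_erase ha')
  simp [this]

/-- peeling off a linear factor corresponding to an identically-zero column. -/
lemma exists_peelX {p : Polynomial (Polynomial F)} {a : F} (h : colp a p = 0) :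
    ∃ g, p = Polynomial.C (Polynomial.X - Polynomial.C a) * g ∧
      (∀ j, p.coeff j = (Polynomial.X - Polynomial.C a) * g.coeff j) := by
  have hdvd : Polynomial.C (Polynomial.X - Polynomial.C a) ∣ p := by
    rw [Polynomial.C_dvd_iff_dvd_coeff]
    intro j
    rw [Polynomial.dvd_iff_isRoot]
    have : (colp a p).coeff j = 0 := by rw [h]; simp
    rwa [coeff_colp] at this
  obtain ⟨g, hg⟩ := hdvd
  refine ⟨g, hg, fun j => ?_⟩
  rw [hg, Polynomial.coeff_C_mul]

lemma wle_of_peel {p g : Polynomial (Polynomial F)} {a : F} {n : ℕ} (hn : 1 ≤ n)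
    (hco : ∀ j, p.coeff j = (Polynomial.X - Polynomial.C a) * g.coeff j)
    (hp : wle p n) : wle g (n - 1) := by
  intro i j hij
  by_contra hne
  have hgj : g.coeff j ≠ 0 := by
    intro h0; rw [h0] at hne; simp at hne
  have hi : i ≤ (g.coeff j).natDegree := Polynomial.le_natDegree_of_ne_zero hne
  have hXa : (Polynomial.X - Polynomial.C a : Polynomial F) ≠ 0 := Polynomial.X_sub_C_ne_zero a
  have hdeg : (p.coeff j).natDegree = 1 + (g.coeff j).natDegree := by
    rw [hco j, Polynomial.natDegree_mul hXa hgj, Polynomial.natDegree_X_sub_C]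
  have hle := natDegree_coeff_of_wle hp j
  rw [hdeg] at hle
  omega

lemma degx_of_peel {p g : Polynomial (Polynomial F)} {a : F} {D : ℕ}
    (hco : ∀ j, p.coeff j = (Polynomial.X - Polynomial.C a) * g.coeff j)
    (hD : ∀ j, (p.coeff j).natDegree ≤ D) : ∀ j, (g.coeff j).natDegree + 1 ≤ D ∨ g.coeff j = 0 := by
  intro j
  by_cases hgj : g.coeff j = 0
  · exact Or.inr hgj
  · left
    have hXa : (Polynomial.X - Polynomial.C a : Polynomial F) ≠ 0 := Polynomial.X_sub_C_ne_zero a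
    have hdeg : (p.coeff j).natDegree = 1 + (g.coeff j).natDegree := by
      rw [hco j, Polynomial.natDegree_mul hXa hgj, Polynomial.natDegree_X_sub_C]
    have := hD j
    omega

lemma natDegree_of_peel {p g : Polynomial (Polynomial F)} {a : F}
    (hco : ∀ j, p.coeff j = (Polynomial.X - Polynomial.C a) * g.coeff j) :
    g.natDegree ≤ p.natDegree := by
  apply Polynomial.natDegree_le_iff_coeff_eq_zero.mpr
  intro j hj
  have h0 : p.coeff j = 0 := Polynomial.coeff_eq_zero_of_natDegree_lt hj
  rw [hco j] at h0
  exact (mul_eq_zero.mp h0).resolve_left (Polynomial.X_sub_C_ne_zero a)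

/-- division by a monic polynomial, tracking weighted degree and coefficient degrees. -/
lemma div_wle (p : Polynomial (Polynomial F)) (hp : p.Monic) (m : ℕ) (hm : 1 ≤ m)
    (hdeg : p.natDegree = m) (hwle : wle p m) (N D : ℕ) :
    ∀ G : Polynomial (Polynomial F), wle G N →
    ∃ q r, G = p * q + r ∧ r.degree < p.degree ∧ wle r N ∧
      ((∀ j, (p.coeff j).natDegree = 0) → (∀ j, (G.coeff j).natDegree ≤ D) →
        ∀ j, (r.coeff j).natDegree ≤ D) := by
  suffices H : ∀ k (G : Polynomial (Polynomial F)), G.natDegree ≤ k → wle G N →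
      ∃ q r, G = p * q + r ∧ r.degree < p.degree ∧ wle r N ∧
      ((∀ j, (p.coeff j).natDegree = 0) → (∀ j, (G.coeff j).natDegree ≤ D) →
        ∀ j, (r.coeff j).natDegree ≤ D) by
    exact fun G hG => H G.natDegree G le_rfl hG
  intro k
  induction k using Nat.strong_induction_on with
  | _ k IH =>
  intro G hGk hG
  have hpne : p ≠ 0 := hp.ne_zero
  have hbot : (⊥ : WithBot ℕ) < p.degree :=
    Ne.bot_lt' (Ne.symm (by simpa [Polynomial.degree_eq_bot] using hpne))
  by_cases hG0 : G = 0
  · exact ⟨0, 0, by rw [hG0, mul_zero, add_zero], by rw [Polynomial.degree_zero]; exact hbot,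
      wle_zero N, by intro _ _ j; simp⟩
  set t := G.natDegree with ht
  by_cases hklt : t < m
  · refine ⟨0, G, by rw [mul_zero, zero_add], ?_, hG, fun _ hGD j => hGD j⟩
    have h1 : G.degree = (t : WithBot ℕ) := Polynomial.degree_eq_natDegree hG0
    have h2 : p.degree = (m : WithBot ℕ) := hdeg ▸ Polynomial.degree_eq_natDegree hpne
    rw [h1, h2]
    exact_mod_cast hklt
  push_neg at hklt
  have htN : t ≤ N := natDegree_le_of_wle hG
  set c : Polynomial F := G.coeff t with hc
  have hcne : c ≠ 0 := Polynomial.leadingCoeff_ne_zero.mpr hG0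
  set M : Polynomial (Polynomial F) := Polynomial.C c * Polynomial.X ^ (t - m) with hM
  have hMcoeff : ∀ j, (M * p).coeff j =
      c * (if t - m ≤ j then p.coeff (j - (t - m)) else 0) := by
    intro j
    rw [hM, mul_assoc, Polynomial.coeff_C_mul, mul_comm (Polynomial.X ^ (t-m)) p,
      Polynomial.coeff_mul_X_pow']
  have hMPhigh : ∀ j, t ≤ j → (M * p).coeff j = if j = t then c else 0 := by
    intro j hj
    rw [hMcoeff j, if_pos (by omega)]
    by_cases hjt : j = t
    · subst hjt
      rw [if_pos rfl]
      have h3 : t - (t - m) = m := by omega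
      rw [h3, ← hdeg, hp.coeff_natDegree, mul_one]
    · rw [if_neg hjt]
      have h3 : p.natDegree < j - (t - m) := by omega
      rw [Polynomial.coeff_eq_zero_of_natDegree_lt h3, mul_zero]
  set G' := G - M * p with hG'
  have hG'high : ∀ j, t ≤ j → G'.coeff j = 0 := by
    intro j hj
    rw [hG', Polynomial.coeff_sub, hMPhigh j hj]
    by_cases hjt : j = t
    · rw [if_pos hjt, hjt, ← hc, sub_self]
    · rw [if_neg hjt]
      have : G.coeff j = 0 := Polynomial.coeff_eq_zero_of_natDegree_lt (by omega)
      rw [this, sub_zero]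
  have hcd : c.natDegree ≤ N - t := by rw [hc]; exact natDegree_coeff_of_wle hG t
  have hwleM : wle M ((N - t) + (t - m)) := by
    rw [hM, Polynomial.C_mul_X_pow_eq_monomial]
    exact wle_mono (by omega) (wle_monomial _ _)
  have hwleMP : wle (M * p) N := by
    apply wle_mono _ (wle_mul hwleM hwle)
    omega
  have hG'wle : wle G' N := wle_sub hG hwleMP
  by_cases hG'0 : G' = 0
  · refine ⟨M, 0, ?_, by rw [Polynomial.degree_zero]; exact hbot, wle_zero N,
      by intro _ _ j; simp⟩
    have h5 : G - M * p = 0 := hG'0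
    rw [sub_eq_zero] at h5
    rw [mul_comm p M, add_zero]
    exact h5
  have hG'lt : G'.natDegree < t := by
    have hle : G'.natDegree ≤ t - 1 := by
      apply Polynomial.natDegree_le_iff_coeff_eq_zero.mpr
      intro j hj
      exact hG'high j (by omega)
    omega
  obtain ⟨q', r', hEq, hdegr, hwler, hDr⟩ :=
    IH G'.natDegree (by omega) G' le_rfl hG'wle
  refine ⟨M + q', r', ?_, hdegr, hwler, ?_⟩
  · have h4 : G = M * p + G' := by rw [hG']; ring
    rw [h4, hEq]
    ring
  · intro hP0 hGD j
    apply hDr hP0 _ j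
    intro j'
    have h6 : G'.coeff j' = G.coeff j' - (M * p).coeff j' := by
      rw [hG', Polynomial.coeff_sub]
    rw [h6]
    apply le_trans (Polynomial.natDegree_sub_le _ _)
    rw [max_le_iff]
    refine ⟨hGD j', ?_⟩
    rw [hMcoeff j']
    apply le_trans (Polynomial.natDegree_mul_le)
    have h7 : (if t - m ≤ j' then p.coeff (j' - (t-m)) else 0).natDegree = 0 := by
      split
      · exact hP0 _
      · simp
    rw [h7, add_zero, hc]
    exact hGD t

/-- The key lemma: a monic (in `y`) polynomial of degree `m`, genuinely depending on `x`,
on an `n × n` grid has weight `(n-m)*n` or at least `(n-m)*n + (m-1)`. -/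
lemma key (A B : Finset F) (n m : ℕ) (hA : A.card = n) (hB : B.card = n)
    (p : Polynomial (Polynomial F)) (hp : p.Monic) (hdeg : p.natDegree = m) (hwle : wle p m)
    (hm1 : 1 ≤ m) (hmn : m < n) (hx : 1 ≤ (tau p).natDegree) :
    wt A B p = (n - m) * n ∨ (n - m) * n + (m - 1) ≤ wt A B p := by
  classical
  set g2 : Polynomial F := ∏ b ∈ B, (Polynomial.X - Polynomial.C b) with hg2
  have hg2monic : g2.Monic := Polynomial.monic_prod_of_monic _ _ fun b _ => Polynomial.monic_X_sub_C b
  have hg2deg : g2.natDegree = n := by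
    rw [hg2, Polynomial.natDegree_prod _ _ (fun b _ => Polynomial.X_sub_C_ne_zero b)]
    simp [hB]
  have hg2eval : ∀ b ∈ B, g2.eval b = 0 := by
    intro b hb
    rw [hg2, Polynomial.eval_prod]
    apply Finset.prod_eq_zero hb
    simp
  set G2 : Polynomial (Polynomial F) := g2.map Polynomial.C with hG2
  have hG2monic : G2.Monic := hg2monic.map _
  have hG2deg : G2.natDegree = n := by
    rw [hG2, hg2monic.natDegree_map]
    exact hg2deg
  have hG2wle : wle G2 n := by
    intro i j hij
    rw [hG2, Polynomial.coeff_map]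
    rcases Nat.eq_zero_or_pos i with hi | hi
    · subst hi
      rw [Polynomial.coeff_C_zero]
      exact Polynomial.coeff_eq_zero_of_natDegree_lt (by omega)
    · rw [Polynomial.coeff_C, if_neg (by omega)]
  obtain ⟨q, r, hEq, hdegr, hwler, -⟩ :=
    div_wle p hp m hm1 hdeg hwle n 0 G2 hG2wle
  have hcolid : ∀ a : F, g2 = colp a p * colp a q + colp a r := by
    intro a
    have h := congrArg (colp a) hEq
    rw [hG2] at h
    rwa [colp_mapC, colp_add, colp_mul] at h
  have hpne : p ≠ 0 := hp.ne_zero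
  have hr0 : r ≠ 0 := by
    intro h0
    rw [h0, add_zero] at hEq
    have hq0 : q ≠ 0 := by
      intro hq0
      rw [hq0, mul_zero] at hEq
      exact hG2monic.ne_zero hEq
    have htau := congrArg tau hEq
    rw [map_mul, hG2, tau_mapC] at htau
    have hd := congrArg Polynomial.natDegree htau
    rw [Polynomial.natDegree_C, Polynomial.natDegree_mul (fun h => hpne (tau_injective (by simpa using h)))
      (fun h => hq0 (tau_injective (by simpa using h)))] at hd
    omega
  set J := r.natDegree with hJ
  have hJm : J < m := by
    rw [hJ, ← hdeg]
    exact Polynomial.natDegree_lt_natDegree hr0 hdegr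
  -- column degree facts
  have hcolpdeg : ∀ a : F, (colp a p).natDegree = m := fun a => by
    rw [colp, hp.natDegree_map, hdeg]
  have hcolpne : ∀ a : F, colp a p ≠ 0 := fun a => (hp.map _).ne_zero
  have hzcolp : ∀ a : F, zcol B a p ≤ m := fun a =>
    (zcol_le_natDegree (hcolpne a)).trans (le_of_eq (hcolpdeg a))
  -- zeros of p are zeros of r
  have hzerozero : ∀ a : F, ∀ b ∈ B, ev a b p = 0 → ev a b r = 0 := by
    intro a b hb h0
    have h1 := congrArg (Polynomial.eval b) (hcolid a)
    rw [Polynomial.eval_add, Polynomial.eval_mul, hg2eval b hb] at h1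
    have h2 : (colp a p).eval b = 0 := h0
    rw [h2, zero_mul, zero_add] at h1
    exact h1.symm
  set C0 := A.filter (fun a => colp a r = 0) with hC0
  set c0 := C0.card with hc0
  have hc0J : c0 + J ≤ n := by
    have hrJ : r.coeff J ≠ 0 := by
      rw [hJ]
      exact Polynomial.leadingCoeff_ne_zero.mpr hr0
    have hvan : ∀ a ∈ C0, (r.coeff J).eval a = 0 := by
      intro a ha
      have h1 : colp a r = 0 := (Finset.mem_filter.mp ha).2
      have h2 : (colp a r).coeff J = 0 := by rw [h1]; simp
      rwa [coeff_colp] at h2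
    have h3 := card_le_natDegree_of_vanish C0 _ hrJ hvan
    have h4 := natDegree_coeff_of_wle hwler J
    have h5 : J ≤ n := by omega
    omega
  have hofff : ∀ a ∈ A.filter (fun a => ¬ colp a r = 0), zcol B a p ≤ J := by
    intro a ha
    have hne : colp a r ≠ 0 := (Finset.mem_filter.mp ha).2
    have h1 : zcol B a p ≤ zcol B a r := by
      apply Finset.card_le_card
      intro b hb
      rw [Finset.mem_filter] at hb ⊢
      exact ⟨hb.1, hzerozero a b hb.1 hb.2⟩
    apply h1.trans
    apply (zcol_le_natDegree hne).trans
    exact (colp_natDegree_le a r)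
  -- global bookkeeping
  set W := wt A B p with hW
  set Z := ∑ a ∈ A, zcol B a p with hZ
  have hWZ : W + Z = n * n := by
    rw [hW, hZ, wt, ← Finset.sum_add_distrib]
    have : ∀ a ∈ A, wcol B a p + zcol B a p = n := by
      intro a _
      rw [wcol_add_zcol, hB]
    rw [Finset.sum_congr rfl this, Finset.sum_const, smul_eq_mul, hA]
  have hsplit : ∑ a ∈ C0, zcol B a p + ∑ a ∈ A.filter (fun a => ¬ colp a r = 0), zcol B a p = Z := by
    rw [hZ, hC0]
    exact Finset.sum_filter_add_sum_filter_not A _ _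
  have hcards : c0 + (A.filter (fun a => ¬ colp a r = 0)).card = n := by
    rw [hc0, hC0, ← hA]
    exact Finset.card_filter_add_card_filter_not _
  have hsum1 : ∑ a ∈ C0, zcol B a p ≤ c0 * m := by
    rw [hc0]
    calc ∑ a ∈ C0, zcol B a p ≤ C0.card • m :=
          Finset.sum_le_card_nsmul _ _ m (fun a _ => hzcolp a)
      _ = C0.card * m := by rw [smul_eq_mul]
  rcases Nat.eq_zero_or_pos J with hJ0 | hJpos
  · -- J = 0
    set r0 := r.coeff 0 with hr0def
    have hr0ne : r0 ≠ 0 := by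
      rw [hr0def, ← hJ0, hJ]
      exact Polynomial.leadingCoeff_ne_zero.mpr hr0
    have hrC : r = Polynomial.C r0 := by
      rw [hr0def]
      exact Polynomial.eq_C_of_natDegree_eq_zero (by omega)
    have hcolr : ∀ a : F, colp a r = Polynomial.C (r0.eval a) := by
      intro a
      rw [hrC, colp_C]
    have hsum2 : ∑ a ∈ A.filter (fun a => ¬ colp a r = 0), zcol B a p = 0 := by
      apply Finset.sum_eq_zero
      intro a ha
      have := hofff a ha
      omega
    have hZb : Z ≤ c0 * m := by omega
    by_cases hc0n : c0 = n
    · -- C0 = A: then the weight is exactly (n-m)*n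
      left
      have hC0A : C0 = A := by
        apply Finset.eq_of_subset_of_card_le (Finset.filter_subset _ _)
        rw [← hc0, hc0n, hA]
      have hvanA : ∀ a ∈ A, r0.eval a = 0 := by
        intro a ha
        have h1 : colp a r = 0 := by
          rw [← hC0A] at ha
          exact (Finset.mem_filter.mp ha).2
        rw [hcolr a] at h1
        exact Polynomial.C_eq_zero.mp h1
      -- q is nonzero with column degrees ≤ n - m, and p*q vanishes on the grid
      have hq0 : q ≠ 0 := by
        intro hq0
        rw [hq0, mul_zero, zero_add] at hEq
        have hnd := congrArg Polynomial.natDegree hEq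
        rw [hG2deg] at hnd
        have hrJ' : r.natDegree = J := hJ.symm
        omega
      have hqdeg : q.natDegree = n - m := by
        have h1 : p * q = G2 - r := by rw [hEq]; ring
        have hrn : r.natDegree < G2.natDegree := by
          rw [hG2deg]
          have hrJ' : r.natDegree = J := hJ.symm
          omega
        have h2 : (G2 - r).natDegree = n := by
          rw [Polynomial.natDegree_sub_eq_left_of_natDegree_lt hrn, hG2deg]
        have h3 := congrArg Polynomial.natDegree h1
        rw [Polynomial.natDegree_mul hpne hq0, hdeg, h2] at h3
        omega
      have hcolqne : ∀ a ∈ A, colp a q ≠ 0 := by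
        intro a ha hq0'
        have h1 := hcolid a
        have h2 : colp a r = 0 := by
          rw [hcolr a, hvanA a ha]
          simp
        rw [hq0', mul_zero, h2, add_zero] at h1
        exact hg2monic.ne_zero h1
      have hzcolq : ∀ a ∈ A, zcol B a q ≤ n - m := by
        intro a ha
        apply (zcol_le_natDegree (hcolqne a ha)).trans
        rw [← hqdeg]
        exact colp_natDegree_le a q
      have hcover : ∀ a ∈ A, (n : ℕ) ≤ zcol B a p + zcol B a q := by
        intro a ha
        have hBsub : B ⊆ (B.filter fun b => ev a b p = 0) ∪ (B.filter fun b => ev a b q = 0) := by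
          intro b hb
          have h1 := congrArg (Polynomial.eval b) (hcolid a)
          rw [Polynomial.eval_add, Polynomial.eval_mul, hg2eval b hb] at h1
          have h2 : ev a b r = 0 := by
            show (colp a r).eval b = 0
            rw [hcolr a, hvanA a ha]
            simp
          have h3 : ev a b p * ev a b q = 0 := by
            have : (colp a p).eval b * (colp a q).eval b + (colp a r).eval b = 0 := h1.symm
            rw [show (colp a r).eval b = 0 from h2] at this
            rwa [add_zero] at this
          rcases mul_eq_zero.mp h3 with h4 | h4
          · exact Finset.mem_union_left _ (Finset.mem_filter.mpr ⟨hb, h4⟩)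
          · exact Finset.mem_union_right _ (Finset.mem_filter.mpr ⟨hb, h4⟩)
        calc (n : ℕ) = B.card := hB.symm
          _ ≤ _ := Finset.card_le_card hBsub
          _ ≤ _ := Finset.card_union_le _ _
      have hZlow : n * n ≤ Z + n * (n - m) := by
        have h1 : ∑ a ∈ A, (n : ℕ) ≤ ∑ a ∈ A, (zcol B a p + zcol B a q) :=
          Finset.sum_le_sum hcover
        rw [Finset.sum_const, smul_eq_mul, hA, Finset.sum_add_distrib] at h1
        have h2 : ∑ a ∈ A, zcol B a q ≤ n * (n - m) := by
          calc ∑ a ∈ A, zcol B a q ≤ A.card • (n - m) :=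
                Finset.sum_le_card_nsmul _ _ _ (fun a ha => hzcolq a ha)
            _ = n * (n - m) := by rw [smul_eq_mul, hA]
        omega
      -- combine: Z ≤ c0 * m = n * m and Z ≥ n * m
      have hZnm : Z ≤ n * m := by
        rw [hc0n] at hZb
        exact hZb
      have idA : n * (n - m) + n * m = n * n := by
        zify [le_of_lt hmn]
        ring
      have idB : (n - m) * n + n * m = n * n := by
        zify [le_of_lt hmn]
        ring
      linarith [hWZ, hZlow, hZnm]
    · -- c0 ≤ n - 1 : weight is large
      right
      have hc0le : c0 ≤ n - 1 := by
        have : c0 ≤ n := by omega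
        omega
      have hZsmall : Z ≤ (n - 1) * m := by
        apply hZb.trans
        exact Nat.mul_le_mul_right m hc0le
      have idB : (n - m) * n + n * m = n * n := by
        zify [le_of_lt hmn]
        ring
      have idC : (n - 1) * m + m = n * m := by
        zify [show (1:ℕ) ≤ n by omega]
        ring
      have hm1eq : (m - 1) + 1 = m := by omega
      linarith [hWZ, hZsmall, idB, idC, hm1eq]
  · -- J ≥ 1
    right
    have hsum2 : ∑ a ∈ A.filter (fun a => ¬ colp a r = 0), zcol B a p ≤ (n - c0) * J := by
      have hcardoff : (A.filter (fun a => ¬ colp a r = 0)).card = n - c0 := by omega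
      calc ∑ a ∈ A.filter (fun a => ¬ colp a r = 0), zcol B a p
          ≤ (A.filter (fun a => ¬ colp a r = 0)).card • J :=
            Finset.sum_le_card_nsmul _ _ _ (fun a ha => hofff a ha)
        _ = (n - c0) * J := by rw [smul_eq_mul, hcardoff]
    have hZb : Z ≤ c0 * m + (n - c0) * J := by omega
    have harith : c0 * m + (n - c0) * J + ((n - m) * n + (m - 1)) ≤ n * n := by
      zify [le_of_lt hmn, hm1, show c0 ≤ n by omega]
      nlinarith [mul_nonneg (show (0:ℤ) ≤ (n:ℤ) - J - c0 by push_cast; omega)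
          (show (0:ℤ) ≤ (m:ℤ) - J by push_cast; omega),
        mul_nonneg (show (0:ℤ) ≤ (J:ℤ) - 1 by push_cast; omega)
          (show (0:ℤ) ≤ (m:ℤ) - 1 - J by push_cast; omega)]
    linarith [hWZ, hZb, harith]

lemma wt_zero (A B : Finset F) : wt A B (0 : Polynomial (Polynomial F)) = 0 := by
  apply Finset.sum_eq_zero
  intro a _
  rw [wcol, Finset.card_eq_zero, Finset.filter_eq_empty_iff]
  intro b _
  simp [ev]

lemma coeff_top_eq_C {p : Polynomial (Polynomial F)} {n : ℕ} (h : wle p n) :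
    p.coeff n = Polynomial.C ((p.coeff n).coeff 0) := by
  ext i
  rcases Nat.eq_zero_or_pos i with hi | hi
  · rw [hi, Polynomial.coeff_C_zero]
  · rw [Polynomial.coeff_C, if_neg (by omega)]
    exact h i n (by omega)

lemma coeff_eq_zero_of_wle {p : Polynomial (Polynomial F)} {n j : ℕ} (h : wle p n)
    (hj : n < j) : p.coeff j = 0 := by
  ext i
  simp [h i j (by omega)]

lemma colp_natDegree_le_sub_one {p : Polynomial (Polynomial F)} {n : ℕ} (h : wle p n)
    (hc : (p.coeff n).coeff 0 = 0) (a : F) : (colp a p).natDegree ≤ n - 1 := by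
  apply Polynomial.natDegree_le_iff_coeff_eq_zero.mpr
  intro j hj
  rw [coeff_colp]
  rcases Nat.lt_or_ge n j with hnj | hnj
  · rw [coeff_eq_zero_of_wle h hnj]
    simp
  · have hjn : j = n := by omega
    subst hjn
    have : p.coeff j = 0 := by
      rw [coeff_top_eq_C h, hc]
      simp
    rw [this]
    simp

lemma wt_ge (A B : Finset F) (p : Polynomial (Polynomial F)) (D : ℕ)
    (h : ∀ a ∈ A, colp a p ≠ 0) (hd : ∀ a ∈ A, (colp a p).natDegree ≤ D) :
    A.card * (B.card - D) ≤ wt A B p := by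
  rw [wt]
  calc A.card * (B.card - D) = A.card • (B.card - D) := by rw [smul_eq_mul]
    _ ≤ ∑ a ∈ A, wcol B a p := by
        apply Finset.card_nsmul_le_sum
        intro a ha
        have h1 := le_wcol (B := B) (h a ha)
        have h2 := hd a ha
        omega

/-- coefficient of `tau p` in terms of those of `p`. -/
lemma coeff_tau_eq_zero {p : Polynomial (Polynomial F)} {n : ℕ} (h : wle p n)
    (hc : (p.coeff 0).coeff n = 0) : (tau p).coeff n = 0 := by
  ext i
  rw [coeff_coeff_tau]
  rcases Nat.eq_zero_or_pos i with hi | hi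
  · rw [hi]; exact hc
  · exact h n i (by omega)

/-- arithmetic helper: `(d₁-d+1)(d₂-1) ≤ d₁(d₂-d+1)` when `1 ≤ d < d₁ ≤ d₂`. -/
lemma arith_colcase {d d1 d2 : ℕ} (hd : 1 ≤ d) (h1 : d < d1) (h2 : d1 ≤ d2) :
    (d1 - d + 1) * (d2 - 1) ≤ d1 * (d2 - (d - 1)) := by
  have hd2 : 1 ≤ d2 := by omega
  zify [le_of_lt h1, show d - 1 ≤ d2 by omega, hd2, hd]
  nlinarith [mul_nonneg (show (0:ℤ) ≤ (d:ℤ) - 1 by push_cast; omega)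
    (show (0:ℤ) ≤ (d2:ℤ) - d1 by push_cast; omega)]

/-- arithmetic helper: `(d₁-d+1)(d₂-1) ≤ d₁(d₂-d)` when `1 ≤ d < d₁ < d₂`. -/
lemma arith_strict {d d1 d2 : ℕ} (hd : 1 ≤ d) (h1 : d < d1) (h2 : d1 < d2) :
    (d1 - d + 1) * (d2 - 1) ≤ d1 * (d2 - d) := by
  zify [le_of_lt h1, show d ≤ d2 by omega, show (1:ℕ) ≤ d2 by omega]
  nlinarith [mul_nonneg (show (0:ℤ) ≤ (d:ℤ) - 1 by push_cast; omega)
    (show (0:ℤ) ≤ (d2:ℤ) - d1 - 1 by push_cast; omega)]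

/-- arithmetic helper: `(d₁-d+1)(d₂-1) ≤ (d₁-d+2)(d₂-2)` when `2 ≤ d < d₁ < d₂`. -/
lemma arith_rowpeel {d d1 d2 : ℕ} (hd : 2 ≤ d) (h1 : d < d1) (h2 : d1 < d2) :
    (d1 - d + 1) * (d2 - 1) ≤ (d1 - (d - 1) + 1) * (d2 - 1 - 1) := by
  have e1 : d1 - (d - 1) + 1 = d1 - d + 2 := by omega
  rw [e1]
  zify [le_of_lt h1, show (1:ℕ) ≤ d2 by omega, show (1:ℕ) ≤ d2 - 1 by omega]
  nlinarith [show (0:ℤ) ≤ (d:ℤ) - 2 by push_cast; omega,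
    show (1:ℤ) ≤ (d2:ℤ) - d1 by push_cast; omega]

/-- the identity `(n-d)*n + (d-1) = (n-d+1)*(n-1)` for `d < n`. -/
lemma arith_keyid {d n : ℕ} (hd : 1 ≤ d) (h1 : d < n) :
    (n - d) * n + (d - 1) = (n - d + 1) * (n - 1) := by
  zify [le_of_lt h1, hd, show (1:ℕ) ≤ n by omega]
  ring

/-- The main dichotomy: second-weight estimate for bivariate polynomials on a grid,
in the range `d < #A ≤ #B`. -/
lemma main1 : ∀ (d : ℕ) (A B : Finset F) (p : Polynomial (Polynomial F)), wle p d →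
    d < A.card → A.card ≤ B.card → wt A B p ≠ 0 →
    wt A B p = (A.card - d) * B.card ∨ (A.card - d + 1) * (B.card - 1) ≤ wt A B p := by
  intro d
  induction d using Nat.strong_induction_on with
  | _ d IH =>
  intro A B p hwle hdA hAB hw0
  rcases Nat.eq_zero_or_pos d with hd0 | hdpos
  · -- d = 0 : p is a nonzero constant
    subst hd0
    left
    have hpc : p = Polynomial.C (Polynomial.C ((p.coeff 0).coeff 0)) := by
      ext j i
      rcases Nat.eq_zero_or_pos j with hj | hj
      · subst hj
        rw [Polynomial.coeff_C_zero]
        rcases Nat.eq_zero_or_pos i with hi | hi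
        · subst hi; rw [Polynomial.coeff_C_zero]
        · rw [Polynomial.coeff_C, if_neg (by omega)]
          exact hwle i 0 (by omega)
      · rw [Polynomial.coeff_C, if_neg (by omega)]
        simp [hwle i j (by omega)]
    have hc : (p.coeff 0).coeff 0 ≠ 0 := by
      intro h
      rw [h] at hpc
      simp only [map_zero] at hpc
      rw [hpc, wt_zero] at hw0
      exact hw0 rfl
    rw [hpc, wt_const _ _ _ hc, Nat.sub_zero]
  -- d ≥ 1
  by_cases hcol : ∃ a ∈ A, colp a p = 0
  · -- a zero column: peel it off
    obtain ⟨a, haA, hcola⟩ := hcol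
    obtain ⟨g, hpg, hco⟩ := exists_peelX hcola
    have hwleg : wle g (d-1) := wle_of_peel hdpos hco hwle
    have hwt : wt A B p = wt (A.erase a) B g := by rw [hpg]; exact wt_peelX haA g
    have hcard : (A.erase a).card = A.card - 1 := Finset.card_erase_of_mem haA
    have hres := IH (d-1) (by omega) (A.erase a) B g hwleg (by omega) (by omega)
      (by rw [← hwt]; exact hw0)
    rw [hcard] at hres
    rcases hres with h | h
    · left
      rw [hwt, h]
      congr 1
      omega
    · right
      rw [hwt]
      have e : A.card - 1 - (d - 1) + 1 = A.card - d + 1 := by omega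
      rwa [e] at h
  push_neg at hcol
  by_cases hrow : ∃ b ∈ B, colp b (tau p) = 0
  · -- a zero row: peel it off on the transposed grid
    obtain ⟨b, hbB, hrowb⟩ := hrow
    obtain ⟨g, hpg, hco⟩ := exists_peelX hrowb
    have hwleg : wle g (d-1) := wle_of_peel hdpos hco (wle_tau hwle)
    have hwt : wt A B p = wt (B.erase b) A g := by
      rw [← wt_tau A B p, hpg]
      exact wt_peelX hbB g
    have hcardB : (B.erase b).card = B.card - 1 := Finset.card_erase_of_mem hbB
    rcases Nat.lt_or_ge d 2 with hd1 | hd2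
    · -- d = 1 : the peeled polynomial is a nonzero constant
      right
      have hd1' : d = 1 := by omega
      have hgc : g = Polynomial.C (Polynomial.C ((g.coeff 0).coeff 0)) := by
        have hg0 : wle g 0 := by simpa [hd1'] using hwleg
        ext j i
        rcases Nat.eq_zero_or_pos j with hj | hj
        · subst hj
          rw [Polynomial.coeff_C_zero]
          rcases Nat.eq_zero_or_pos i with hi | hi
          · subst hi; rw [Polynomial.coeff_C_zero]
          · rw [Polynomial.coeff_C, if_neg (by omega)]
            exact hg0 i 0 (by omega)
        · rw [Polynomial.coeff_C, if_neg (by omega)]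
          simp [hg0 i j (by omega)]
      have hc : (g.coeff 0).coeff 0 ≠ 0 := by
        intro h
        rw [h] at hgc
        simp only [map_zero] at hgc
        rw [hwt, hgc, wt_zero] at hw0
        exact hw0 rfl
      rw [hwt, hgc, wt_const _ _ _ hc, hcardB, hd1']
      have e : A.card - 1 + 1 = A.card := by omega
      rw [e, Nat.mul_comm]
    rcases Nat.lt_or_ge A.card B.card with hlt | hge
    · -- d₁ < d₂ : recurse on (A, B.erase b) with the transposed peeled polynomial
      right
      have hwt2 : wt (B.erase b) A g = wt A (B.erase b) (tau g) := by
        rw [← wt_tau A (B.erase b) (tau g), tau_tau]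
      have hres := IH (d-1) (by omega) A (B.erase b) (tau g) (wle_tau hwleg)
        (by omega) (by omega) (by rw [← hwt2, ← hwt]; exact hw0)
      rw [hcardB] at hres
      rw [hwt, hwt2]
      rcases hres with h | h
      · rw [h]
        have e : A.card - (d - 1) = A.card - d + 1 := by omega
        rw [e]
      · apply le_trans _ h
        exact arith_rowpeel hd2 hdA hlt
    · -- d₁ = d₂ : recurse on (B.erase b, A)
      have heq : A.card = B.card := le_antisymm hAB hge
      have hres := IH (d-1) (by omega) (B.erase b) A g hwleg (by omega) (by omega)
        (by rw [← hwt]; exact hw0)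
      rw [hcardB] at hres
      rw [hwt]
      rcases hres with h | h
      · left
        rw [h]
        have e1 : B.card - 1 - (d - 1) = B.card - d := by omega
        rw [e1, heq]
      · right
        have e : B.card - 1 - (d - 1) + 1 = B.card - d + 1 := by omega
        rw [e] at h
        have e2 : (B.card - d + 1) * (A.card - 1) = (A.card - d + 1) * (B.card - 1) := by
          rw [heq]
        rwa [e2] at h
  push_neg at hrow
  -- no zero rows or columns
  set c2 := (p.coeff d).coeff 0 with hc2
  set c1 := (p.coeff 0).coeff d with hc1
  by_cases hc2z : c2 = 0
  · -- columns have degree ≤ d - 1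
    right
    have hcoldeg : ∀ a ∈ A, (colp a p).natDegree ≤ d - 1 :=
      fun a _ => colp_natDegree_le_sub_one hwle hc2z a
    have hge := wt_ge A B p (d-1) hcol hcoldeg
    apply le_trans _ hge
    exact arith_colcase hdpos hdA hAB
  by_cases hc1z : c1 = 0
  · -- rows have degree ≤ d - 1
    right
    have htw : wle (tau p) d := wle_tau hwle
    have hcoldeg : ∀ b ∈ B, (colp b (tau p)).natDegree ≤ d - 1 := by
      intro b _
      apply colp_natDegree_le_sub_one htw _ b
      rw [coeff_coeff_tau]
      exact hc1z
    have hge := wt_ge B A (tau p) (d-1) hrow hcoldeg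
    rw [wt_tau] at hge
    apply le_trans _ hge
    calc (A.card - d + 1) * (B.card - 1) ≤ (A.card - d + 1) * B.card :=
          Nat.mul_le_mul_left _ (by omega)
      _ ≤ B.card * (A.card - (d - 1)) := by
          rw [Nat.mul_comm]
          apply Nat.mul_le_mul_left
          omega
  -- both corner coefficients are nonzero
  have hpcoeffd : p.coeff d = Polynomial.C c2 := coeff_top_eq_C hwle
  have hcoldegeq : ∀ a : F, (colp a p).natDegree = d := by
    intro a
    apply le_antisymm (natDegree_colp_le_of_wle hwle a)
    apply Polynomial.le_natDegree_of_ne_zero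
    rw [coeff_colp, hpcoeffd]
    simpa using hc2z
  rcases Nat.lt_or_ge A.card B.card with hlt | hge
  · -- d₁ < d₂ : column bound suffices
    right
    have hge2 := wt_ge A B p d hcol (fun a _ => le_of_eq (hcoldegeq a))
    apply le_trans _ hge2
    exact arith_strict hdpos hdA hlt
  · -- d₁ = d₂ : use the key lemma on the rescaled polynomial
    have heq : B.card = A.card := le_antisymm hge hAB
    set u := c2⁻¹ with hu
    have huz : u ≠ 0 := inv_ne_zero hc2z
    set p' := Polynomial.C (Polynomial.C u) * p with hp'
    have hwlep' : wle p' d := by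
      have h1 : wle (Polynomial.C (Polynomial.C u) : Polynomial (Polynomial F)) 0 := by
        have := wle_C (F := F) (Polynomial.C u)
        simpa using this
      have := wle_mul h1 hwle
      simpa using this
    have hp'coeffd : p'.coeff d = 1 := by
      rw [hp', Polynomial.coeff_C_mul, hpcoeffd, ← Polynomial.C_mul, hu,
        inv_mul_cancel₀ hc2z, Polynomial.C_1]
    have hp'monic : p'.Monic ∧ p'.natDegree = d := by
      constructor
      · apply Polynomial.monic_of_natDegree_le_of_coeff_eq_one d
          (natDegree_le_of_wle hwlep') hp'coeffd
      · apply le_antisymm (natDegree_le_of_wle hwlep')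
        apply Polynomial.le_natDegree_of_ne_zero
        rw [hp'coeffd]
        exact one_ne_zero
    have hx : 1 ≤ (tau p').natDegree := by
      have hcc : ((tau p').coeff d).coeff 0 = u * c1 := by
        rw [coeff_coeff_tau, hp', Polynomial.coeff_C_mul, Polynomial.coeff_C_mul]
      have hne : (tau p').coeff d ≠ 0 := by
        intro h
        rw [h] at hcc
        simp only [Polynomial.coeff_zero] at hcc
        exact hc1z (by
          have := hcc.symm
          rcases mul_eq_zero.mp this with h' | h'
          · exact absurd h' huz
          · exact h')
      have := Polynomial.le_natDegree_of_ne_zero hne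
      omega
    have hkey := key A B A.card d rfl heq p' hp'monic.1 hp'monic.2 hwlep' hdpos hdA hx
    rw [hp', wt_smul _ _ _ huz] at hkey
    rcases hkey with h | h
    · left
      rw [h, heq]
    · right
      rw [arith_keyid hdpos hdA] at h
      rw [heq]
      exact h

lemma eq_const_of_wle0 {p : Polynomial (Polynomial F)} (h : wle p 0) :
    p = Polynomial.C (Polynomial.C ((p.coeff 0).coeff 0)) := by
  ext j i
  rcases Nat.eq_zero_or_pos j with hj | hj
  · subst hj
    rw [Polynomial.coeff_C_zero]
    rcases Nat.eq_zero_or_pos i with hi | hi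
    · subst hi; rw [Polynomial.coeff_C_zero]
    · rw [Polynomial.coeff_C, if_neg (by omega)]
      exact h i 0 (by omega)
  · rw [Polynomial.coeff_C, if_neg (by omega)]
    simp [h i j (by omega)]

lemma pos_of_wt_ne {A B : Finset F} {p : Polynomial (Polynomial F)} (h : wt A B p ≠ 0) :
    1 ≤ A.card ∧ 1 ≤ B.card := by
  constructor
  · by_contra hA
    have : A = ∅ := Finset.card_eq_zero.mp (by omega)
    rw [wt, this, Finset.sum_empty] at h
    exact h rfl
  · by_contra hB
    have hBe : B = ∅ := Finset.card_eq_zero.mp (by omega)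
    apply h
    rw [wt]
    apply Finset.sum_eq_zero
    intro a _
    rw [wcol, hBe]
    simp

lemma natDegree_tau_lt {p : Polynomial (Polynomial F)} {c : ℕ} (hc : 1 ≤ c)
    (h : ∀ j, (p.coeff j).natDegree < c) : (tau p).natDegree < c := by
  have : (tau p).natDegree ≤ c - 1 := by
    apply Polynomial.natDegree_le_iff_coeff_eq_zero.mpr
    intro j hj
    ext i
    rw [coeff_coeff_tau]
    apply Polynomial.coeff_eq_zero_of_natDegree_lt
    have := h i
    omega
  omega

lemma coeffdeg_tau_lt {p : Polynomial (Polynomial F)} {c : ℕ} (hc : 1 ≤ c)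
    (h : p.natDegree < c) : ∀ j, ((tau p).coeff j).natDegree < c := by
  intro j
  have : ((tau p).coeff j).natDegree ≤ c - 1 := by
    apply Polynomial.natDegree_le_iff_coeff_eq_zero.mpr
    intro i hi
    rw [coeff_coeff_tau]
    have : p.coeff i = 0 := Polynomial.coeff_eq_zero_of_natDegree_lt (by omega)
    rw [this]
    simp
  omega

lemma wt_congr {A B : Finset F} {p q : Polynomial (Polynomial F)}
    (h : ∀ a ∈ A, ∀ b ∈ B, ev a b p = ev a b q) : wt A B p = wt A B q := by
  rw [wt, wt]
  apply Finset.sum_congr rfl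
  intro a ha
  rw [wcol, wcol]
  congr 1
  apply Finset.filter_congr
  intro b hb
  rw [h a ha b hb]

/-- facts about the grid polynomial `∏ (x - s)` mapped to constants in `F[x][y]`. -/
lemma gridpoly_facts (S : Finset F) (hS : 1 ≤ S.card) :
    ∃ G : Polynomial (Polynomial F), G.Monic ∧ G.natDegree = S.card ∧ wle G S.card ∧
      (∀ j, (G.coeff j).natDegree = 0) ∧ (∀ a : F, colp a G = ∏ s ∈ S, (Polynomial.X - Polynomial.C s)) ∧
      (∀ a : F, ∀ s ∈ S, ev a s G = 0) := by
  classical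
  set g : Polynomial F := ∏ s ∈ S, (Polynomial.X - Polynomial.C s) with hg
  have hgmonic : g.Monic := Polynomial.monic_prod_of_monic _ _ fun s _ => Polynomial.monic_X_sub_C s
  have hgdeg : g.natDegree = S.card := by
    rw [hg, Polynomial.natDegree_prod _ _ (fun s _ => Polynomial.X_sub_C_ne_zero s)]
    simp
  have hgeval : ∀ s ∈ S, g.eval s = 0 := by
    intro s hs
    rw [hg, Polynomial.eval_prod]
    apply Finset.prod_eq_zero hs
    simp
  refine ⟨g.map Polynomial.C, hgmonic.map _, by rw [hgmonic.natDegree_map]; exact hgdeg, ?_, ?_, ?_, ?_⟩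
  · intro i j hij
    rw [Polynomial.coeff_map]
    rcases Nat.eq_zero_or_pos i with hi | hi
    · subst hi
      rw [Polynomial.coeff_C_zero]
      exact Polynomial.coeff_eq_zero_of_natDegree_lt (by omega)
    · rw [Polynomial.coeff_C, if_neg (by omega)]
  · intro j
    rw [Polynomial.coeff_map]
    exact Polynomial.natDegree_C _
  · intro a
    rw [colp_mapC]
  · intro a s hs
    show (colp a (g.map Polynomial.C)).eval s = 0
    rw [colp_mapC]
    exact hgeval s hs

/-- grid reduction: replace `p` by a polynomial with the same values on `A ×ˢ B`,
the same weighted degree bound, and small partial degrees. -/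
lemma reduce (A B : Finset F) (hA : 1 ≤ A.card) (hB : 1 ≤ B.card) (d : ℕ)
    (p : Polynomial (Polynomial F)) (hwle : wle p d) :
    ∃ p', wle p' d ∧ (∀ a ∈ A, ∀ b ∈ B, ev a b p' = ev a b p) ∧
      p'.natDegree < B.card ∧ (∀ j, (p'.coeff j).natDegree < A.card) := by
  classical
  obtain ⟨G2, hG2m, hG2d, hG2w, hG2c, hG2col, hG2ev⟩ := gridpoly_facts B hB
  obtain ⟨q1, r1, hEq1, hdeg1, hwle1, -⟩ :=
    div_wle G2 hG2m B.card hB hG2d hG2w d 0 p hwle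
  have hr1deg : r1.natDegree < B.card := by
    rcases eq_or_ne r1 0 with h0 | h0
    · rw [h0, Polynomial.natDegree_zero]; omega
    · have := Polynomial.natDegree_lt_natDegree h0 hdeg1
      omega
  have hr1val : ∀ a : F, ∀ b ∈ B, ev a b r1 = ev a b p := by
    intro a b hb
    have h1 := congrArg (ev a b) hEq1
    rw [ev_add, ev_mul] at h1
    have h2 : ev a b G2 = 0 := hG2ev a b hb
    rw [h2, zero_mul, zero_add] at h1
    exact h1.symm
  obtain ⟨G1, hG1m, hG1d, hG1w, hG1c, hG1col, hG1ev⟩ := gridpoly_facts A hA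
  have htrw : wle (tau r1) d := wle_tau hwle1
  have htrD : ∀ j, ((tau r1).coeff j).natDegree ≤ B.card - 1 := by
    intro j
    have := coeffdeg_tau_lt hB hr1deg j
    omega
  obtain ⟨q2, r2, hEq2, hdeg2, hwle2, hinner⟩ :=
    div_wle G1 hG1m A.card hA hG1d hG1w d (B.card - 1) (tau r1) htrw
  have hr2D : ∀ j, (r2.coeff j).natDegree ≤ B.card - 1 :=
    hinner hG1c htrD
  have hr2deg : r2.natDegree < A.card := by
    rcases eq_or_ne r2 0 with h0 | h0
    · rw [h0, Polynomial.natDegree_zero]; omega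
    · have := Polynomial.natDegree_lt_natDegree h0 hdeg2
      omega
  refine ⟨tau r2, wle_tau hwle2, ?_, ?_, ?_⟩
  · intro a ha b hb
    have h1 := congrArg (ev b a) hEq2
    rw [ev_add, ev_mul, ev_tau] at h1
    have h2 : ev b a G1 = 0 := hG1ev b a ha
    rw [h2, zero_mul, zero_add] at h1
    rw [ev_tau, ← h1]
    exact hr1val a b hb
  · have h1 : (tau r2).natDegree ≤ B.card - 1 := by
      apply Polynomial.natDegree_le_iff_coeff_eq_zero.mpr
      intro j hj
      ext i
      rw [coeff_coeff_tau]
      apply Polynomial.coeff_eq_zero_of_natDegree_lt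
      have := hr2D i
      omega
    omega
  · intro j
    have h1 : ((tau r2).coeff j).natDegree ≤ A.card - 1 := by
      apply Polynomial.natDegree_le_iff_coeff_eq_zero.mpr
      intro i hi
      rw [coeff_coeff_tau]
      have : r2.coeff i = 0 := Polynomial.coeff_eq_zero_of_natDegree_lt (by omega)
      rw [this]
      simp
    omega

/-- minimum-distance bound (for reduced polynomials). -/
lemma min2' : ∀ (d : ℕ) (A B : Finset F) (p : Polynomial (Polynomial F)), wle p d →
    p.natDegree < B.card → (∀ j, (p.coeff j).natDegree < A.card) → wt A B p ≠ 0 →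
    A.card + B.card ≤ wt A B p + d + 1 := by
  intro d
  induction d using Nat.strong_induction_on with
  | _ d IH =>
  intro A B p hwle hdy hdx hw0
  obtain ⟨hA1, hB1⟩ := pos_of_wt_ne hw0
  rcases Nat.eq_zero_or_pos d with hd0 | hdpos
  · -- constant
    subst hd0
    have hpc := eq_const_of_wle0 hwle
    have hc : (p.coeff 0).coeff 0 ≠ 0 := by
      intro h
      rw [h] at hpc
      simp only [map_zero] at hpc
      rw [hpc, wt_zero] at hw0
      exact hw0 rfl
    have hwt : wt A B p = A.card * B.card := by rw [hpc]; exact wt_const _ _ _ hc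
    rw [hwt]
    have hid : A.card * B.card + 1 = (A.card - 1) * (B.card - 1) + A.card + B.card := by
      zify [hA1, hB1]
      ring
    omega
  by_cases hcolz : ∃ a ∈ A, colp a p = 0
  · obtain ⟨a, haA, hcola⟩ := hcolz
    obtain ⟨g, hpg, hco⟩ := exists_peelX hcola
    have hwleg : wle g (d-1) := wle_of_peel hdpos hco hwle
    have hwt : wt A B p = wt (A.erase a) B g := by rw [hpg]; exact wt_peelX haA g
    have hcard : (A.erase a).card = A.card - 1 := Finset.card_erase_of_mem haA
    have hw0' : wt (A.erase a) B g ≠ 0 := by rw [← hwt]; exact hw0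
    have hA2 : 2 ≤ A.card := by
      have := (pos_of_wt_ne hw0').1
      omega
    have hgy : g.natDegree < B.card :=
      lt_of_le_of_lt (natDegree_of_peel hco) hdy
    have hgx : ∀ j, (g.coeff j).natDegree < (A.erase a).card := by
      intro j
      have := degx_of_peel hco (D := A.card - 1) (fun j => by have := hdx j; omega) j
      rcases this with h | h
      · omega
      · rw [h, Polynomial.natDegree_zero]
        omega
    have hres := IH (d-1) (by omega) (A.erase a) B g hwleg hgy hgx hw0'
    rw [hcard] at hres
    rw [hwt]
    omega
  push_neg at hcolz
  by_cases hrowz : ∃ b ∈ B, colp b (tau p) = 0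
  · obtain ⟨b, hbB, hrowb⟩ := hrowz
    obtain ⟨g, hpg, hco⟩ := exists_peelX hrowb
    have hwleg : wle g (d-1) := wle_of_peel hdpos hco (wle_tau hwle)
    have hwt : wt A B p = wt (B.erase b) A g := by
      rw [← wt_tau A B p, hpg]
      exact wt_peelX hbB g
    have hcard : (B.erase b).card = B.card - 1 := Finset.card_erase_of_mem hbB
    have hw0' : wt (B.erase b) A g ≠ 0 := by rw [← hwt]; exact hw0
    have hB2 : 2 ≤ B.card := by
      have := (pos_of_wt_ne hw0').1
      omega
    have hgy : g.natDegree < A.card :=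
      lt_of_le_of_lt (natDegree_of_peel hco) (natDegree_tau_lt hA1 hdx)
    have hgx : ∀ j, (g.coeff j).natDegree < (B.erase b).card := by
      intro j
      have hbase : ∀ j', ((tau p).coeff j').natDegree ≤ B.card - 1 := by
        intro j'
        have := coeffdeg_tau_lt hB1 hdy j'
        omega
      have := degx_of_peel hco (D := B.card - 1) hbase j
      rcases this with h | h
      · omega
      · rw [h, Polynomial.natDegree_zero]
        omega
    have hres := IH (d-1) (by omega) (B.erase b) A g hwleg hgy hgx hw0'
    rw [hcard] at hres
    rw [hwt]
    omega
  push_neg at hrowz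
  -- all columns are nonzero polynomials of degree < B.card
  have hcoldeg : ∀ a : F, (colp a p).natDegree < B.card :=
    fun a => lt_of_le_of_lt (colp_natDegree_le a p) hdy
  rcases Nat.lt_or_ge (d+1) B.card with hBd | hBd
  · -- B.card ≥ d + 2 : use the column bound
    have hge := wt_ge A B p d hcolz (fun a _ => natDegree_colp_le_of_wle hwle a)
    have harith : A.card + B.card ≤ A.card * (B.card - d) + d + 1 := by
      zify [show d ≤ B.card by omega]
      nlinarith [mul_nonneg (show (0:ℤ) ≤ (A.card:ℤ) - 1 by push_cast; omega)
        (show (0:ℤ) ≤ (B.card:ℤ) - d - 1 by push_cast; omega)]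
    omega
  · -- B.card ≤ d + 1 : each column has a nonzero point
    have hge : A.card ≤ wt A B p := by
      rw [wt]
      calc A.card = A.card • 1 := by rw [smul_eq_mul, Nat.mul_one]
        _ ≤ ∑ a ∈ A, wcol B a p := by
            apply Finset.card_nsmul_le_sum
            intro a ha
            exact wcol_pos (hcolz a ha) (hcoldeg a)
    omega

/-- the minimum-distance bound for arbitrary polynomials. -/
lemma min2 (d : ℕ) (A B : Finset F) (p : Polynomial (Polynomial F)) (hwle : wle p d)
    (hw0 : wt A B p ≠ 0) : A.card + B.card ≤ wt A B p + d + 1 := by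
  obtain ⟨hA1, hB1⟩ := pos_of_wt_ne hw0
  obtain ⟨p', hwle', hval, hdy, hdx⟩ := reduce A B hA1 hB1 d p hwle
  have hwt : wt A B p' = wt A B p := wt_congr hval
  rw [← hwt] at hw0 ⊢
  exact min2' d A B p' hwle' hdy hdx hw0

/-- the bridge from bivariate `MvPolynomial` to `F[x][y]`. -/
noncomputable def Phi : MvPolynomial (Fin 2) F →+* Polynomial (Polynomial F) :=
  MvPolynomial.eval₂Hom (Polynomial.C.comp Polynomial.C)
    (fun i => if i = 0 then Polynomial.C Polynomial.X else Polynomial.X)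

lemma Phi_C (c : F) : Phi (MvPolynomial.C c : MvPolynomial (Fin 2) F)
    = Polynomial.C (Polynomial.C c) := by
  rw [Phi, MvPolynomial.eval₂Hom_C, RingHom.comp_apply]

lemma Phi_X0 : Phi (MvPolynomial.X (0 : Fin 2) : MvPolynomial (Fin 2) F)
    = Polynomial.C Polynomial.X := by
  rw [Phi, MvPolynomial.eval₂Hom_X', if_pos rfl]

lemma Phi_X1 : Phi (MvPolynomial.X (1 : Fin 2) : MvPolynomial (Fin 2) F)
    = Polynomial.X := by
  rw [Phi, MvPolynomial.eval₂Hom_X', if_neg (by decide)]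

lemma ev_Phi (x : Fin 2 → F) (f : MvPolynomial (Fin 2) F) :
    ev (x 0) (x 1) (Phi f) = MvPolynomial.eval x f := by
  induction f using MvPolynomial.induction_on with
  | C c => rw [Phi_C, ev_C, Polynomial.eval_C, MvPolynomial.eval_C]
  | add p q hp hq => rw [map_add, ev_add, hp, hq, map_add]
  | mul_X p i hp =>
      rw [map_mul, ev_mul, hp, map_mul, MvPolynomial.eval_X]
      congr 1
      fin_cases i
      · simp [Phi_X0]
      · simp [Phi_X1]

lemma Phi_monomial (v : Fin 2 →₀ ℕ) (c : F) :
    Phi (MvPolynomial.monomial v c) =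
      Polynomial.C (Polynomial.C c * Polynomial.X ^ (v 0)) * Polynomial.X ^ (v 1) := by
  rw [Phi, MvPolynomial.eval₂Hom_monomial]
  rw [Finsupp.prod_fintype _ _ (fun i => pow_zero _), Fin.prod_univ_two]
  rw [if_pos rfl, if_neg (by decide)]
  rw [RingHom.comp_apply, ← Polynomial.C_pow, ← mul_assoc, ← Polynomial.C_mul]

lemma wle_Phi {f : MvPolynomial (Fin 2) F} {n : ℕ} (h : f.totalDegree ≤ n) :
    wle (Phi f) n := by
  intro i j hij
  rw [f.as_sum, map_sum, Polynomial.finset_sum_coeff, Polynomial.finset_sum_coeff]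
  apply Finset.sum_eq_zero
  intro v hv
  have hvle : v 0 + v 1 ≤ n := by
    have h1 := MvPolynomial.le_totalDegree hv
    have h2 : (v.sum fun _ e => e) = v 0 + v 1 := by
      rw [Finsupp.sum_fintype _ _ (fun _ => rfl), Fin.sum_univ_two]
    omega
  rw [Phi_monomial, Polynomial.coeff_mul_X_pow']
  split_ifs with h1
  · rw [Polynomial.coeff_C]
    split_ifs with h2
    · rw [Polynomial.coeff_C_mul, Polynomial.coeff_X_pow]
      split_ifs with h3
      · exfalso; omega
      · rw [mul_zero]
    · simp
  · simp

lemma ncard_pair (P : F → F → Prop) [∀ a b, Decidable (P a b)] (A0 A1 : Finset F) :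
    {x : Fin 2 → F | (x 0 ∈ A0 ∧ x 1 ∈ A1) ∧ P (x 0) (x 1)}.ncard =
      ((A0 ×ˢ A1).filter fun ab => P ab.1 ab.2).card := by
  classical
  have hinj : Function.Injective (fun ab : F × F => ![ab.1, ab.2]) := by
    intro ab ab' h
    have h0 := congrFun h 0
    have h1 := congrFun h 1
    simp only [Matrix.cons_val_zero, Matrix.cons_val_one, Matrix.head_cons] at h0 h1
    exact Prod.ext h0 h1
  have himage : {x : Fin 2 → F | (x 0 ∈ A0 ∧ x 1 ∈ A1) ∧ P (x 0) (x 1)} =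
      ↑(((A0 ×ˢ A1).filter fun ab => P ab.1 ab.2).image fun ab => ![ab.1, ab.2]) := by
    ext x
    simp only [Set.mem_setOf_eq, Finset.coe_image, Set.mem_image, Finset.mem_coe,
      Finset.mem_filter, Finset.mem_product]
    constructor
    · rintro ⟨⟨h0, h1⟩, hP⟩
      refine ⟨(x 0, x 1), ⟨⟨h0, h1⟩, hP⟩, ?_⟩
      funext i
      fin_cases i <;> rfl
    · rintro ⟨ab, ⟨⟨h0, h1⟩, hP⟩, rfl⟩
      refine ⟨⟨?_, ?_⟩, ?_⟩ <;> simpa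
  rw [himage, Set.ncard_coe_finset, Finset.card_image_of_injective _ hinj]

lemma ncard_eq_wt (A : Fin 2 → Finset F) (f : MvPolynomial (Fin 2) F) :
    {x : Fin 2 → F | (∀ i, x i ∈ A i) ∧ MvPolynomial.eval x f ≠ 0}.ncard
      = wt (A 0) (A 1) (Phi f) := by
  classical
  have hset : {x : Fin 2 → F | (∀ i, x i ∈ A i) ∧ MvPolynomial.eval x f ≠ 0} =
      {x : Fin 2 → F | (x 0 ∈ A 0 ∧ x 1 ∈ A 1) ∧
        (fun a b => ev a b (Phi f) ≠ 0) (x 0) (x 1)} := by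
    ext x
    simp only [Set.mem_setOf_eq, Fin.forall_fin_two, ev_Phi]
  rw [hset, ← wt_card]
  exact ncard_pair (fun a b => ev a b (Phi f) ≠ 0) (A 0) (A 1)

lemma totalDegree_linear (i : Fin 2) (a : F) :
    (MvPolynomial.X i - MvPolynomial.C a : MvPolynomial (Fin 2) F).totalDegree ≤ 1 := by
  rw [sub_eq_add_neg]
  apply le_trans (MvPolynomial.totalDegree_add _ _)
  rw [max_le_iff]
  constructor
  · rw [MvPolynomial.totalDegree_X]
  · rw [MvPolynomial.totalDegree_neg, MvPolynomial.totalDegree_C]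
    omega

lemma rect (A : Fin 2 → Finset F) (S1 S2 : Finset F) (h1 : S1 ⊆ A 0) (h2 : S2 ⊆ A 1) :
    ∃ f : MvPolynomial (Fin 2) F, f.totalDegree ≤ S1.card + S2.card ∧
      {x : Fin 2 → F | (∀ i, x i ∈ A i) ∧ MvPolynomial.eval x f ≠ 0}.ncard
        = ((A 0).card - S1.card) * ((A 1).card - S2.card) := by
  classical
  refine ⟨(∏ a ∈ S1, (MvPolynomial.X 0 - MvPolynomial.C a)) *
    (∏ b ∈ S2, (MvPolynomial.X 1 - MvPolynomial.C b)), ?_, ?_⟩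
  · apply le_trans (MvPolynomial.totalDegree_mul _ _)
    apply Nat.add_le_add
    · apply le_trans (MvPolynomial.totalDegree_finset_prod _ _)
      calc ∑ a ∈ S1, (MvPolynomial.X 0 - MvPolynomial.C a :
            MvPolynomial (Fin 2) F).totalDegree ≤ ∑ a ∈ S1, 1 :=
            Finset.sum_le_sum (fun a _ => totalDegree_linear 0 a)
        _ = S1.card := by rw [Finset.sum_const, smul_eq_mul, Nat.mul_one]
    · apply le_trans (MvPolynomial.totalDegree_finset_prod _ _)
      calc ∑ b ∈ S2, (MvPolynomial.X 1 - MvPolynomial.C b :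
            MvPolynomial (Fin 2) F).totalDegree ≤ ∑ b ∈ S2, 1 :=
            Finset.sum_le_sum (fun b _ => totalDegree_linear 1 b)
        _ = S2.card := by rw [Finset.sum_const, smul_eq_mul, Nat.mul_one]
  · have hev : ∀ x : Fin 2 → F, MvPolynomial.eval x
        ((∏ a ∈ S1, (MvPolynomial.X 0 - MvPolynomial.C a)) *
          (∏ b ∈ S2, (MvPolynomial.X 1 - MvPolynomial.C b)))
        = (∏ a ∈ S1, (x 0 - a)) * (∏ b ∈ S2, (x 1 - b)) := by
      intro x
      rw [map_mul, map_prod, map_prod]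
      simp
    have hset : {x : Fin 2 → F | (∀ i, x i ∈ A i) ∧ MvPolynomial.eval x
        ((∏ a ∈ S1, (MvPolynomial.X 0 - MvPolynomial.C a)) *
          (∏ b ∈ S2, (MvPolynomial.X 1 - MvPolynomial.C b))) ≠ 0} =
        {x : Fin 2 → F | (x 0 ∈ A 0 ∧ x 1 ∈ A 1) ∧
          (fun a b => a ∉ S1 ∧ b ∉ S2) (x 0) (x 1)} := by
      ext x
      simp only [Set.mem_setOf_eq, Fin.forall_fin_two, hev]
      constructor
      · rintro ⟨hx, hne⟩
        rcases mul_ne_zero_iff.mp hne with ⟨hne1, hne2⟩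
        refine ⟨hx, ?_, ?_⟩
        · intro hmem
          exact hne1 (Finset.prod_eq_zero hmem (by simp))
        · intro hmem
          exact hne2 (Finset.prod_eq_zero hmem (by simp))
      · rintro ⟨hx, hn1, hn2⟩
        refine ⟨hx, mul_ne_zero ?_ ?_⟩
        · rw [Finset.prod_ne_zero_iff]
          intro a ha hc
          rw [sub_eq_zero] at hc
          exact hn1 (by rw [hc]; exact ha)
        · rw [Finset.prod_ne_zero_iff]
          intro b hb hc
          rw [sub_eq_zero] at hc
          exact hn2 (by rw [hc]; exact hb)
    rw [hset, ncard_pair (fun a b => a ∉ S1 ∧ b ∉ S2) (A 0) (A 1)]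
    have heq : ((A 0 ×ˢ A 1).filter fun ab => ab.1 ∉ S1 ∧ ab.2 ∉ S2)
        = ((A 0).filter (· ∉ S1)) ×ˢ ((A 1).filter (· ∉ S2)) := by
      ext ab
      simp only [Finset.mem_filter, Finset.mem_product]
      tauto
    rw [heq, Finset.card_product, ← Finset.sdiff_eq_filter, ← Finset.sdiff_eq_filter,
      Finset.card_sdiff_of_subset h1, Finset.card_sdiff_of_subset h2]

/-- rectangle codeword of any prescribed size. -/
lemma rect_mem (A : Fin 2 → Finset F) (d k l : ℕ) (hk : k ≤ (A 0).card)
    (hl : l ≤ (A 1).card) (hkl : k + l ≤ d) :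
    ∃ f : MvPolynomial (Fin 2) F, f.totalDegree ≤ d ∧
      {x : Fin 2 → F | (∀ i, x i ∈ A i) ∧ MvPolynomial.eval x f ≠ 0}.ncard
        = ((A 0).card - k) * ((A 1).card - l) := by
  obtain ⟨S1, hS1sub, hS1card⟩ := Finset.exists_subset_card_eq hk
  obtain ⟨S2, hS2sub, hS2card⟩ := Finset.exists_subset_card_eq hl
  obtain ⟨f, hdeg, hncard⟩ := rect A S1 S2 hS1sub hS2sub
  refine ⟨f, le_trans hdeg ?_, ?_⟩
  · rw [hS1card, hS2card]; exact hkl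
  · rw [hncard, hS1card, hS2card]

end SW


/-- Corollary 1 of the paper: the second Hamming weight of `C(d)` over
`X = A_1 × A_2` with `3 ≤ d_1 ≤ d_2` and `d ≥ 2`, in all three ranges of `d`. -/
theorem stmt16 (F : Type*) [Field F] [Fintype F]
    (A : Fin 2 → Finset F) (d₁ d₂ : ℕ)
    (hA1 : (A 0).card = d₁) (hA2 : (A 1).card = d₂)
    (h3 : 3 ≤ d₁) (h12 : d₁ ≤ d₂) (d : ℕ) (hd2 : 2 ≤ d) :
    (d < d₁ →
      IsLeast {w | w ∈ codeWeights F 2 A d ∧ sInf (codeWeights F 2 A d) < w}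
        ((d₁ - d + 1) * (d₂ - 1))) ∧
    (d₁ ≤ d → d ≤ d₁ + d₂ - 2 →
      IsLeast {w | w ∈ codeWeights F 2 A d ∧ sInf (codeWeights F 2 A d) < w}
        (d₁ + d₂ - d)) ∧
    (d₁ + d₂ - 2 < d →
      IsLeast {w | w ∈ codeWeights F 2 A d ∧ sInf (codeWeights F 2 A d) < w}
        2) := by
  classical
  have hbridge : ∀ w ∈ codeWeights F 2 A d, w ≠ 0 ∧ ∃ p : Polynomial (Polynomial F),
      SW.wle p d ∧ w = SW.wt (A 0) (A 1) p := by
    rintro w ⟨f, hfd, hweq, hw0⟩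
    exact ⟨hw0, SW.Phi f, SW.wle_Phi hfd, by rw [hweq, SW.ncard_eq_wt]⟩
  have hmem : ∀ k l : ℕ, k ≤ d₁ → l ≤ d₂ → k + l ≤ d → (d₁ - k) * (d₂ - l) ≠ 0 →
      (d₁ - k) * (d₂ - l) ∈ codeWeights F 2 A d := by
    intro k l hk hl hkl hne
    obtain ⟨f, hfd, hncard⟩ := SW.rect_mem A d k l (by rw [hA1]; exact hk)
      (by rw [hA2]; exact hl) hkl
    exact ⟨f, hfd, by rw [hncard, hA1, hA2], hne⟩
  refine ⟨?_, ?_, ?_⟩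
  · -- Part 1 : 2 ≤ d < d₁
    intro hdlt
    have hmin_mem : (d₁ - d) * d₂ ∈ codeWeights F 2 A d := by
      have h := hmem d 0 (le_of_lt hdlt) (by omega) (by omega)
        (by rw [Nat.sub_zero]; intro hc; rcases Nat.mul_eq_zero.mp hc with h | h <;> omega)
      rwa [Nat.sub_zero] at h
    have htar_mem : (d₁ - d + 1) * (d₂ - 1) ∈ codeWeights F 2 A d := by
      have e : d₁ - (d - 1) = d₁ - d + 1 := by omega
      have h := hmem (d-1) 1 (by omega) (by omega) (by omega)
        (by rw [e]; intro hc; rcases Nat.mul_eq_zero.mp hc with h | h <;> omega)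
      rwa [e] at h
    have hdich : ∀ w ∈ codeWeights F 2 A d,
        w = (d₁ - d) * d₂ ∨ (d₁ - d + 1) * (d₂ - 1) ≤ w := by
      intro w hw
      obtain ⟨hw0, p, hwle, hwt⟩ := hbridge w hw
      have h := SW.main1 d (A 0) (A 1) p hwle (by rw [hA1]; exact hdlt)
        (by rw [hA1, hA2]; exact h12) (by rw [← hwt]; exact hw0)
      rw [hA1, hA2] at h
      rw [hwt]
      exact h
    have hstrict : (d₁ - d) * d₂ < (d₁ - d + 1) * (d₂ - 1) := by
      zify [le_of_lt hdlt, show (1:ℕ) ≤ d₂ by omega]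
      nlinarith [show (2:ℤ) ≤ (d:ℤ) by exact_mod_cast hd2,
        show (d:ℤ) < (d₁:ℤ) by exact_mod_cast hdlt,
        show (d₁:ℤ) ≤ (d₂:ℤ) by exact_mod_cast h12]
    have hleast : IsLeast (codeWeights F 2 A d) ((d₁ - d) * d₂) := by
      refine ⟨hmin_mem, ?_⟩
      intro w hw
      rcases hdich w hw with h | h
      · exact le_of_eq h.symm
      · exact le_trans (le_of_lt hstrict) h
    have hsinf : sInf (codeWeights F 2 A d) = (d₁ - d) * d₂ := hleast.csInf_eq
    constructor
    · exact ⟨htar_mem, by rw [hsinf]; exact hstrict⟩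
    · rintro w ⟨hwW, hlt⟩
      rw [hsinf] at hlt
      rcases hdich w hwW with h | h
      · exact absurd h (by omega)
      · exact h
  · -- Part 2 : d₁ ≤ d ≤ d₁ + d₂ - 2
    intro hd1le hdle
    have hmin_mem : d₁ + d₂ - d - 1 ∈ codeWeights F 2 A d := by
      have e1 : d₁ - (d₁ - 1) = 1 := by omega
      have e2 : d₂ - (d - d₁ + 1) = d₁ + d₂ - d - 1 := by omega
      have h := hmem (d₁ - 1) (d - d₁ + 1) (by omega) (by omega) (by omega)
        (by rw [e1, e2, one_mul]; omega)
      rwa [e1, e2, one_mul] at h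
    have hsec_mem : d₁ + d₂ - d ∈ codeWeights F 2 A d := by
      have e1 : d₁ - (d₁ - 1) = 1 := by omega
      have e2 : d₂ - (d - d₁) = d₁ + d₂ - d := by omega
      have h := hmem (d₁ - 1) (d - d₁) (by omega) (by omega) (by omega)
        (by rw [e1, e2, one_mul]; omega)
      rwa [e1, e2, one_mul] at h
    have hlb : ∀ w ∈ codeWeights F 2 A d, d₁ + d₂ - d - 1 ≤ w := by
      intro w hw
      obtain ⟨hw0, p, hwle, hwt⟩ := hbridge w hw
      have h := SW.min2 d (A 0) (A 1) p hwle (by rw [← hwt]; exact hw0)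
      rw [hA1, hA2, ← hwt] at h
      omega
    have hleast : IsLeast (codeWeights F 2 A d) (d₁ + d₂ - d - 1) := ⟨hmin_mem, hlb⟩
    have hsinf : sInf (codeWeights F 2 A d) = d₁ + d₂ - d - 1 := hleast.csInf_eq
    constructor
    · exact ⟨hsec_mem, by rw [hsinf]; omega⟩
    · rintro w ⟨hwW, hlt⟩
      rw [hsinf] at hlt
      have := hlb w hwW
      omega
  · -- Part 3 : d > d₁ + d₂ - 2
    intro hdgt
    have h1mem : 1 ∈ codeWeights F 2 A d := by
      have e1 : d₁ - (d₁ - 1) = 1 := by omega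
      have e2 : d₂ - (d₂ - 1) = 1 := by omega
      have h := hmem (d₁ - 1) (d₂ - 1) (by omega) (by omega) (by omega)
        (by rw [e1, e2, one_mul]; omega)
      rwa [e1, e2, one_mul] at h
    have h2mem : 2 ∈ codeWeights F 2 A d := by
      have e1 : d₁ - (d₁ - 1) = 1 := by omega
      have e2 : d₂ - (d₂ - 2) = 2 := by omega
      have h := hmem (d₁ - 1) (d₂ - 2) (by omega) (by omega) (by omega)
        (by rw [e1, e2, one_mul]; omega)
      rwa [e1, e2, one_mul] at h
    have hlb : ∀ w ∈ codeWeights F 2 A d, 1 ≤ w := by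
      rintro w ⟨f, _, _, hw0⟩
      exact Nat.one_le_iff_ne_zero.mpr hw0
    have hleast : IsLeast (codeWeights F 2 A d) 1 := ⟨h1mem, hlb⟩
    have hsinf : sInf (codeWeights F 2 A d) = 1 := hleast.csInf_eq
    constructor
    · exact ⟨h2mem, by rw [hsinf]; omega⟩
    · rintro w ⟨hwW, hlt⟩
      rw [hsinf] at hlt
      omega
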